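/- (General ratio lemma, m groups) Let m ≥ 1 and p₁,...,p_m positive integers. Index combinations by tuples κ = (κ₁,...,κ_m) with 1 ≤ κ_φ ≤ p_φ. Given positive reals λ^{φ}_{κ} > 0 for each group index φ and each tuple κ, and prescribed positive ratios k^{φ}_{j} > 0 for 1 ≤ φ ≤ m, 1 ≤ j ≤ p_φ - 1, there exist strictly positive reals γ_κ > 0 such that for every φ and every j, (Σ_{κ : κ_φ = 1} λ^{φ}_{κ} γ_{κ}) / (Σ_{κ : κ_φ = j+1} λ^{φ}_{κ} γ_{κ}) = k^{φ}_{j}, where in the denominator sum the tuple is obtained from κ by replacing its φ-th coordinate by j+1. -/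

import Mathlib

theorem stmt11 {m : ℕ} (hm : 1 ≤ m) (p : Fin m → ℕ) [∀ φ, NeZero (p φ)]
    (lam : Fin m → ((φ : Fin m) → Fin (p φ)) → ℝ)
    (hlam : ∀ φ κ, 0 < lam φ κ)
    (k : (φ : Fin m) → Fin (p φ) → ℝ)
    (hk : ∀ φ j, j ≠ 0 → 0 < k φ j) :
    ∃ γ : ((φ : Fin m) → Fin (p φ)) → ℝ, (∀ κ, 0 < γ κ) ∧
      ∀ (φ : Fin m) (j : Fin (p φ)), j ≠ 0 →
        (∑ κ ∈ Finset.univ.filter (fun κ : (φ : Fin m) → Fin (p φ) => κ φ = 0),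
            lam φ κ * γ κ) /
          (∑ κ ∈ Finset.univ.filter (fun κ : (φ : Fin m) → Fin (p φ) => κ φ = 0),
            lam φ (Function.update κ φ j) * γ (Function.update κ φ j)) = k φ j := by
  classical
  -- constraint vectors
  set c : ((φ : Fin m) × Fin (p φ)) → (((φ : Fin m) → Fin (p φ)) → ℝ) := fun fj κ =>
    if fj.2 = 0 then 0 else
      (if κ fj.1 = 0 then lam fj.1 κ else 0)
        - k fj.1 fj.2 * (if κ fj.1 = fj.2 then lam fj.1 κ else 0) with hc_def
  set V : Submodule ℝ (((φ : Fin m) → Fin (p φ)) → ℝ) := Submodule.span ℝ (Set.range c)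
    with hV
  have hcval : ∀ (φ : Fin m) (j : Fin (p φ)) (κ : (φ : Fin m) → Fin (p φ)),
      c ⟨φ, j⟩ κ = if j = 0 then 0 else
        (if κ φ = 0 then lam φ κ else 0)
          - k φ j * (if κ φ = j then lam φ κ else 0) := fun _ _ _ => rfl
  have hdisj : Disjoint (V : Set (((φ : Fin m) → Fin (p φ)) → ℝ))
      (stdSimplex ℝ ((φ : Fin m) → Fin (p φ))) := by
    rw [Set.disjoint_left]
    rintro x hxV ⟨hx0, hx1⟩
    obtain ⟨y, hy⟩ := (Submodule.mem_span_range_iff_exists_fun ℝ).mp hxV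
    set s : (φ : Fin m) → Fin (p φ) → ℝ := fun φ t =>
      if t = 0 then ∑ j ∈ Finset.univ.filter (fun j : Fin (p φ) => j ≠ 0), y ⟨φ, j⟩
      else - (k φ t * y ⟨φ, t⟩) with hs
    have hxκ : ∀ κ : (φ : Fin m) → Fin (p φ), x κ = ∑ φ, lam φ κ * s φ (κ φ) := by
      intro κ
      have h1 : x κ = ∑ fj : (φ : Fin m) × Fin (p φ), y fj * c fj κ := by
        rw [← hy]; simp [Finset.sum_apply]
      rw [h1, ← Finset.univ_sigma_univ, Finset.sum_sigma]
      refine Finset.sum_congr rfl fun φ _ => ?_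
      by_cases h0 : κ φ = 0
      · have he : ∀ jj : Fin (p φ), y ⟨φ, jj⟩ * c ⟨φ, jj⟩ κ =
            if jj ≠ 0 then y ⟨φ, jj⟩ * lam φ κ else 0 := by
          intro jj
          rw [hcval]
          by_cases hjj : jj = 0
          · rw [if_pos hjj, mul_zero, if_neg (not_not_intro hjj)]
          · have hne : ¬ (κ φ = jj) := fun h => hjj (h.symm.trans h0)
            rw [if_neg hjj, if_pos h0, if_neg hne, if_pos hjj]
            ring
        rw [Finset.sum_congr rfl (fun jj _ => he jj), ← Finset.sum_filter]
        have hs0 : s φ (κ φ)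
            = ∑ jj ∈ Finset.univ.filter (fun jj : Fin (p φ) => jj ≠ 0), y ⟨φ, jj⟩ := by
          simp [hs, h0]
        rw [hs0, Finset.mul_sum]
        exact Finset.sum_congr rfl fun jj _ => (mul_comm _ _)
      · rw [Finset.sum_eq_single (κ φ)]
        · have hsv : s φ (κ φ) = - (k φ (κ φ) * y ⟨φ, κ φ⟩) := by
            simp [hs, h0]
          rw [hcval, if_neg h0, if_neg h0, if_pos rfl, hsv]
          ring
        · intro jj _ hjj
          rw [hcval]
          by_cases hj0 : jj = 0
          · rw [if_pos hj0, mul_zero]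
          · have h2 : ¬ (κ φ = jj) := fun h => hjj h.symm
            rw [if_neg hj0, if_neg h0, if_neg h2]
            ring
        · intro h; exact absurd (Finset.mem_univ _) h
    -- weights
    set w : (φ : Fin m) → Fin (p φ) → ℝ := fun φ t => if t = 0 then 1 else (k φ t)⁻¹
      with hw
    have hwpos : ∀ φ t, 0 < w φ t := by
      intro φ t
      by_cases ht : t = 0
      · simp [hw, ht]
      · simp only [hw, if_neg ht]
        exact inv_pos.mpr (hk φ t ht)
    have hwsum : ∀ φ, ∑ t : Fin (p φ), w φ t * s φ t = 0 := by
      intro φ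
      rw [← Finset.sum_filter_add_sum_filter_not Finset.univ (fun t : Fin (p φ) => t = 0)]
      have e1 : Finset.univ.filter (fun t : Fin (p φ) => t = 0) = {0} := by
        ext t; simp
      have e2 : ∑ t ∈ Finset.univ.filter (fun t : Fin (p φ) => ¬ t = 0), w φ t * s φ t
          = ∑ t ∈ Finset.univ.filter (fun t : Fin (p φ) => t ≠ 0), - y ⟨φ, t⟩ := by
        refine Finset.sum_congr rfl fun t ht => ?_
        rw [Finset.mem_filter] at ht
        have ht0 := ht.2
        have hkne : k φ t ≠ 0 := ne_of_gt (hk φ t ht0)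
        simp only [hw, hs, if_neg ht0]
        field_simp
      rw [e1, e2, Finset.sum_singleton]
      have hw0 : w φ 0 * s φ 0
          = ∑ jj ∈ Finset.univ.filter (fun jj : Fin (p φ) => jj ≠ 0), y ⟨φ, jj⟩ := by
        simp [hw, hs]
      rw [hw0, Finset.sum_neg_distrib]
      ring
    have hmin : ∀ φ, ∃ t0 : Fin (p φ), ∀ t, s φ t0 ≤ s φ t := fun φ =>
      Finite.exists_min (s φ)
    choose τ hτ using hmin
    have hτ0 : ∀ φ, s φ (τ φ) ≤ 0 := by
      intro φ
      by_contra h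
      push_neg at h
      have hpos : 0 < ∑ t : Fin (p φ), w φ t * s φ t := by
        refine Finset.sum_pos (fun t _ => mul_pos (hwpos φ t) (lt_of_lt_of_le h (hτ φ t)))
          ⟨0, Finset.mem_univ 0⟩
      rw [hwsum φ] at hpos; exact lt_irrefl 0 hpos
    have hτz : ∀ φ, s φ (τ φ) = 0 := by
      have h := hx0 τ
      rw [hxκ τ] at h
      have hterm : ∀ φ ∈ Finset.univ, lam φ τ * s φ (τ φ) ≤ 0 := fun φ _ =>
        mul_nonpos_of_nonneg_of_nonpos (le_of_lt (hlam φ τ)) (hτ0 φ)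
      have hsum0 : ∑ φ, lam φ τ * s φ (τ φ) = 0 :=
        le_antisymm (Finset.sum_nonpos hterm) h
      intro φ
      have hz := (Finset.sum_eq_zero_iff_of_nonpos hterm).mp hsum0 φ (Finset.mem_univ φ)
      exact (mul_eq_zero.mp hz).resolve_left (ne_of_gt (hlam φ τ))
    have hsz : ∀ φ t, s φ t = 0 := by
      intro φ
      have hnn : ∀ t ∈ Finset.univ, 0 ≤ w φ t * s φ t := by
        intro t _
        exact mul_nonneg (le_of_lt (hwpos φ t)) ((hτz φ) ▸ hτ φ t)
      intro t
      have hz := (Finset.sum_eq_zero_iff_of_nonneg hnn).mp (hwsum φ) t (Finset.mem_univ t)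
      exact (mul_eq_zero.mp hz).resolve_left (ne_of_gt (hwpos φ t))
    have hx_zero : ∀ κ : (φ : Fin m) → Fin (p φ), x κ = 0 := by
      intro κ
      rw [hxκ κ]
      exact Finset.sum_eq_zero fun φ _ => by rw [hsz φ (κ φ), mul_zero]
    rw [Finset.sum_congr rfl (fun κ _ => hx_zero κ)] at hx1
    simp at hx1
  -- separation
  obtain ⟨f, u, v, hfu, huv, hfv⟩ :=
    geometric_hahn_banach_closed_compact (V.convex)
      (Submodule.closed_of_finiteDimensional V)
      (convex_stdSimplex ℝ ((φ : Fin m) → Fin (p φ)))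
      (isCompact_stdSimplex ℝ ((φ : Fin m) → Fin (p φ))) hdisj
  have hu0 : 0 < u := by
    have h0 := hfu 0 (Submodule.zero_mem V)
    rwa [map_zero] at h0
  have hf0 : ∀ z ∈ V, f z = 0 := by
    intro z hz
    by_contra hne
    have hmem : ((|u| + 1) / f z) • z ∈ V := Submodule.smul_mem V _ hz
    have hlt := hfu _ hmem
    rw [map_smul, smul_eq_mul, div_mul_cancel₀ _ hne] at hlt
    exact lt_irrefl u (lt_of_le_of_lt (le_abs_self u) (lt_trans (lt_add_one _) hlt))
  set γ : ((φ : Fin m) → Fin (p φ)) → ℝ := fun κ => f (Pi.single κ 1) with hγ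
  have hsingle : ∀ κ : (φ : Fin m) → Fin (p φ),
      (Pi.single κ 1 : ((φ : Fin m) → Fin (p φ)) → ℝ) ∈
        stdSimplex ℝ ((φ : Fin m) → Fin (p φ)) := by
    intro κ
    constructor
    · intro ψ
      rcases eq_or_ne ψ κ with h | h
      · subst h; simp
      · simp [Pi.single_apply, h]
    · simp [Pi.single_apply]
  have hγpos : ∀ κ, 0 < γ κ := fun κ =>
    lt_trans hu0 (lt_trans huv (hfv _ (hsingle κ)))
  have hlin : ∀ z : ((φ : Fin m) → Fin (p φ)) → ℝ, f z = ∑ κ, z κ * γ κ := by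
    intro z
    conv_lhs => rw [← Finset.univ_sum_single z]
    rw [map_sum]
    refine Finset.sum_congr rfl fun κ _ => ?_
    have hz : (Pi.single κ (z κ) : ((φ : Fin m) → Fin (p φ)) → ℝ)
        = z κ • (Pi.single κ 1 : ((φ : Fin m) → Fin (p φ)) → ℝ) := by
      funext ψ
      rcases eq_or_ne ψ κ with h | h
      · subst h; simp
      · simp [Pi.single_apply, h]
    rw [hz, map_smul, smul_eq_mul]
  refine ⟨γ, hγpos, ?_⟩
  intro φ j hj
  have hcV : c ⟨φ, j⟩ ∈ V := Submodule.subset_span (Set.mem_range_self _)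
  have hc0 := hf0 _ hcV
  rw [hlin] at hc0
  have hc1 : ∑ κ : (φ : Fin m) → Fin (p φ), (((if κ φ = 0 then lam φ κ else 0)
      - k φ j * (if κ φ = j then lam φ κ else 0)) * γ κ) = 0 := by
    have h2 : ∀ κ ∈ Finset.univ, c ⟨φ, j⟩ κ * γ κ
        = ((if κ φ = 0 then lam φ κ else 0)
            - k φ j * (if κ φ = j then lam φ κ else 0)) * γ κ := fun κ _ => by
      rw [hcval, if_neg hj]
    exact (Finset.sum_congr rfl h2).symm.trans hc0
  have hA : (∑ κ ∈ Finset.univ.filter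
        (fun κ : (φ : Fin m) → Fin (p φ) => κ φ = 0), lam φ κ * γ κ)
      = k φ j * ∑ κ ∈ Finset.univ.filter
        (fun κ : (φ : Fin m) → Fin (p φ) => κ φ = j), lam φ κ * γ κ := by
    have e : ∀ κ : (φ : Fin m) → Fin (p φ), ((if κ φ = 0 then lam φ κ else 0)
        - k φ j * (if κ φ = j then lam φ κ else 0)) * γ κ
        = (if κ φ = 0 then lam φ κ * γ κ else 0)
          - k φ j * (if κ φ = j then lam φ κ * γ κ else 0) := by
      intro κ
      by_cases h0 : κ φ = 0
      · have h1 : ¬ (κ φ = j) := fun h => hj (h.symm.trans h0)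
        simp only [if_pos h0, if_neg h1]
        ring
      · by_cases h1 : κ φ = j
        · simp only [if_neg h0, if_pos h1]
          ring
        · simp only [if_neg h0, if_neg h1]
          ring
    rw [Finset.sum_congr rfl (fun κ _ => e κ), Finset.sum_sub_distrib,
      ← Finset.mul_sum, ← Finset.sum_filter, ← Finset.sum_filter, sub_eq_zero] at hc1
    exact hc1
  have hB : (∑ κ ∈ Finset.univ.filter
        (fun κ : (φ : Fin m) → Fin (p φ) => κ φ = 0),
        lam φ (Function.update κ φ j) * γ (Function.update κ φ j))
      = ∑ κ ∈ Finset.univ.filter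
        (fun κ : (φ : Fin m) → Fin (p φ) => κ φ = j), lam φ κ * γ κ := by
    refine Finset.sum_nbij' (fun κ => Function.update κ φ j)
      (fun κ => Function.update κ φ 0) ?_ ?_ ?_ ?_ ?_
    · intro a _
      simp [Function.update_self]
    · intro a _
      simp [Function.update_self]
    · intro a ha
      rw [Finset.mem_filter] at ha
      funext ψ
      rcases eq_or_ne ψ φ with h | h
      · subst h; simp [ha.2]
      · simp [Function.update_of_ne h]
    · intro a ha
      rw [Finset.mem_filter] at ha
      funext ψ
      rcases eq_or_ne ψ φ with h | h
      · subst h; simp [ha.2]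
      · simp [Function.update_of_ne h]
    · intro a _; rfl
  have hDpos : 0 < ∑ κ ∈ Finset.univ.filter
      (fun κ : (φ : Fin m) → Fin (p φ) => κ φ = 0),
      lam φ (Function.update κ φ j) * γ (Function.update κ φ j) := by
    refine Finset.sum_pos (fun κ _ => mul_pos (hlam φ _) (hγpos _)) ?_
    exact ⟨fun ψ => 0, Finset.mem_filter.mpr ⟨Finset.mem_univ _, rfl⟩⟩
  rw [hB] at hDpos ⊢
  rw [hA]
  exact mul_div_cancel_right₀ _ (ne_of_gt hDpos)
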